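/- Let k ≥ 1 and let 𝔇: X^∞ → X^∞ be the k-dilation map (x_0, x_1, …) ↦ (x_0, …, x_0, x_1, …, x_1, …) repeating each coordinate k times. Then for every probability measure μ on X^∞, H^sd(𝔇_*μ) = (1/k)·H^sd(μ). -/

import Mathlib

open MeasureTheory Filter
open scoped NNReal ENNReal

/-- `phi x = x * log x` (with `phi 0 = 0` since `Real.log 0 = 0`). -/
noncomputable def phi (x : ℝ) : ℝ := x * Real.log x

/-- Shannon entropy of a finite indexed family of sets w.r.t. a measure. -/
noncomputable def partEnt {Ω : Type*} [MeasurableSpace Ω] (μ : Measure Ω)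
    {ι : Type*} [Fintype ι] (A : ι → Set Ω) : ℝ :=
  -∑ i, phi ((μ (A i)).toReal)

/-- A finite measurable partition, given as an indexed family. -/
structure IsPartition {Ω : Type*} [MeasurableSpace Ω] {ι : Type*} (A : ι → Set Ω) : Prop where
  meas : ∀ i, MeasurableSet (A i)
  disj : Pairwise (Function.onFun Disjoint A)
  cover : (⋃ i, A i) = Set.univ

/-- The length-`n` cylinder partition `𝒫̄^n` of `X^∞` built from the family `A`. -/
def cyl {X ι : Type*} (A : ι → Set X) (n : ℕ) (w : Fin n → ι) : Set (ℕ → X) :=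
  {x | ∀ i : Fin n, x i ∈ A (w i)}

/-- Stochastic dynamical entropy of `μ` relative to a partition of `X`. -/
noncomputable def HsdP {X : Type*} [MeasurableSpace X] (μ : Measure (ℕ → X))
    {ι : Type*} [Fintype ι] (A : ι → Set X) : EReal :=
  limsup (fun n : ℕ => ((partEnt μ (cyl A n) / n : ℝ) : EReal)) atTop

/-- Stochastic dynamical entropy of `μ`. -/
noncomputable def Hsd {X : Type*} [MeasurableSpace X] (μ : Measure (ℕ → X)) : EReal :=
  ⨆ (k : ℕ) (A : Fin k → Set X) (_ : IsPartition A), HsdP μ A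

/-- The dynamical join `∨_{i=0}^{n-1} T^{-i} 𝒜`. -/
def dynJoin {Ω ι : Type*} (T : Ω → Ω) (A : ι → Set Ω) (n : ℕ) (w : Fin n → ι) : Set Ω :=
  {x | ∀ i : Fin n, T^[i] x ∈ A (w i)}

/-- Kolmogorov–Sinai entropy of `T` w.r.t. `ν` and a partition. -/
noncomputable def ksEntP {Ω : Type*} [MeasurableSpace Ω] (T : Ω → Ω) (ν : Measure Ω)
    {ι : Type*} [Fintype ι] (A : ι → Set Ω) : EReal :=
  limsup (fun n : ℕ => ((partEnt ν (dynJoin T A n) / n : ℝ) : EReal)) atTop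

/-- Kolmogorov–Sinai entropy of `T` w.r.t. `ν`. -/
noncomputable def ksEnt {Ω : Type*} [MeasurableSpace Ω] (T : Ω → Ω) (ν : Measure Ω) : EReal :=
  ⨆ (k : ℕ) (A : Fin k → Set Ω) (_ : IsPartition A), ksEntP T ν A

/-- The shift on the path space `X^∞`. -/
def shift {X : Type*} : (ℕ → X) → (ℕ → X) := fun x n => x (n + 1)

/-! ### Auxiliary material for `hsd_dilation` -/

/-- Division by a positive finite `EReal` constant, as an order isomorphism. -/
noncomputable def EReal.divPosIso (b : EReal) (h0 : 0 < b) (ht : b ≠ ⊤) : EReal ≃o EReal :=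
  Equiv.toOrderIso
    { toFun := fun x => x / b
      invFun := fun x => x * b
      left_inv := fun x => EReal.div_mul_cancel (ne_bot_of_gt h0) ht h0.ne'
      right_inv := fun x => by
        show x * b / b = x
        rw [mul_comm x b, ← EReal.mul_div, EReal.mul_div_cancel (ne_bot_of_gt h0) ht h0.ne'] }
    (EReal.monotone_div_right_of_nonneg h0.le)
    (fun x y h => mul_le_mul_of_nonneg_right h h0.le)

@[simp] lemma EReal.divPosIso_apply (b : EReal) (h0 : 0 < b) (ht : b ≠ ⊤) (x : EReal) :
    EReal.divPosIso b h0 ht x = x / b := rfl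

lemma EReal.iSup_div_const {α : Sort*} (b : EReal) (h0 : 0 < b) (ht : b ≠ ⊤) (g : α → EReal) :
    (⨆ i, g i) / b = ⨆ i, g i / b :=
  ((EReal.divPosIso b h0 ht).to_galoisConnection.l_iSup (f := g) : _)

lemma EReal.limsup_div_const (b : EReal) (h0 : 0 < b) (ht : b ≠ ⊤) (u : ℕ → EReal) :
    limsup (fun n => u n / b) atTop = limsup u atTop / b :=
  ((EReal.divPosIso b h0 ht).limsup_apply (u := u)).symm

lemma partEnt_nonneg {Ω : Type*} [MeasurableSpace Ω] (μ : Measure Ω) [IsProbabilityMeasure μ]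
    {ι : Type*} [Fintype ι] (B : ι → Set Ω) : 0 ≤ partEnt μ B := by
  unfold partEnt
  rw [neg_nonneg]
  apply Finset.sum_nonpos
  intro i _
  have h0 : 0 ≤ (μ (B i)).toReal := ENNReal.toReal_nonneg
  have h1 : (μ (B i)).toReal ≤ 1 := by
    have hle : μ (B i) ≤ 1 := prob_le_one
    simpa using ENNReal.toReal_mono (by simp) hle
  have hlog : Real.log ((μ (B i)).toReal) ≤ 0 := Real.log_nonpos h0 h1
  exact mul_nonpos_of_nonneg_of_nonpos h0 hlog

/-- Key combinatorial identity: cylinder entropy of the dilated measure. -/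
lemma partEnt_dilation {X : Type*} [MeasurableSpace X] (μ : Measure (ℕ → X))
    {ι : Type*} [Fintype ι] {A : ι → Set X} (hA : IsPartition A) {k : ℕ} (hk : 1 ≤ k) (n : ℕ) :
    partEnt (Measure.map (fun x : ℕ → X => fun j => x (j / k)) μ) (cyl A n)
      = partEnt μ (cyl A ((n + k - 1) / k)) := by
  classical
  have hk0 : 0 < k := hk
  set m := (n + k - 1) / k with hm
  set D : (ℕ → X) → (ℕ → X) := fun x => fun j => x (j / k) with hD
  have hDmeas : Measurable D := measurable_pi_iff.2 fun j => measurable_pi_apply _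
  have hcylm : ∀ (N : ℕ) (w : Fin N → ι), MeasurableSet (cyl A N w) := by
    intro N w
    have : cyl A N w = ⋂ i : Fin N, (fun x : ℕ → X => x i) ⁻¹' A (w i) := by
      ext x; simp [cyl, Set.mem_iInter]
    rw [this]
    exact MeasurableSet.iInter fun i => (measurable_pi_apply (i : ℕ)) (hA.meas (w i))
  -- basic arithmetic about the block map
  have ha : ∀ i : ℕ, i < n → i / k < m := by
    intro i hi
    have h1 : (i + k) / k ≤ (n + k - 1) / k := Nat.div_le_div_right (by omega)
    rw [Nat.add_div_right i hk0] at h1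
    omega
  have hb : ∀ j : ℕ, j < m → j * k < n := by
    intro j hj
    rcases Nat.eq_zero_or_pos n with rfl | hn
    · exfalso
      have : m = 0 := by rw [hm]; exact Nat.div_eq_of_lt (by omega)
      omega
    · have h1 : (j + 1) * k ≤ n + k - 1 :=
        (Nat.le_div_iff_mul_le hk0).1 (by rw [← hm]; omega)
      rw [add_mul, one_mul] at h1
      revert h1
      generalize j * k = p
      intro h1
      omega
  -- the block map and its section
  set β : Fin n → Fin m := fun i => ⟨(i : ℕ) / k, ha i i.2⟩ with hβdef
  set s : Fin m → Fin n := fun j => ⟨(j : ℕ) * k, hb j j.2⟩ with hsdef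
  have hβs : ∀ j : Fin m, β (s j) = j := by
    intro j
    apply Fin.ext
    exact Nat.mul_div_cancel j hk0
  -- preimage of a factoring cylinder
  have hpre : ∀ v : Fin m → ι, D ⁻¹' cyl A n (fun i => v (β i)) = cyl A m v := by
    intro v
    ext x
    constructor
    · intro hx j
      have h : D x ((s j : Fin n) : ℕ) ∈ A (v (β (s j))) := hx (s j)
      rw [hβs j] at h
      have hidx : ((s j : Fin n) : ℕ) / k = (j : ℕ) := Nat.mul_div_cancel j hk0
      show x ((j : ℕ)) ∈ A (v j)
      rw [← hidx]
      exact h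
    · intro hx i
      exact hx (β i)
  -- non-factoring cylinders have empty preimage
  have hzero : ∀ w : Fin n → ι, (¬ ∃ v : Fin m → ι, w = fun i => v (β i)) →
      D ⁻¹' cyl A n w = ∅ := by
    intro w hw
    have hii : ∃ i i' : Fin n, β i = β i' ∧ w i ≠ w i' := by
      by_contra h
      push_neg at h
      exact hw ⟨fun j => w (s j), funext fun i => h i (s (β i)) (by rw [hβs])⟩
    obtain ⟨i, i', hββ, hwne⟩ := hii
    ext x
    simp only [Set.mem_preimage, Set.mem_empty_iff_false, iff_false]
    intro hx
    have h1 : x ((i : ℕ) / k) ∈ A (w i) := hx i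
    have h2 : x ((i' : ℕ) / k) ∈ A (w i') := hx i'
    have hdiv : (i : ℕ) / k = (i' : ℕ) / k := by
      have := congrArg (fun z : Fin m => (z : ℕ)) hββ
      simpa [β] using this
    rw [hdiv] at h1
    exact Set.disjoint_left.1 (hA.disj hwne) h1 h2
  -- now compute the entropy
  have hmap : ∀ w : Fin n → ι,
      Measure.map D μ (cyl A n w) = μ (D ⁻¹' cyl A n w) := fun w =>
    Measure.map_apply hDmeas (hcylm n w)
  set e : (Fin m → ι) → (Fin n → ι) := fun v i => v (β i) with hedef
  have he : Function.Injective e := by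
    intro v v' h
    funext j
    have := congrFun h (s j)
    simpa [e, hβs] using this
  set F : (Fin n → ι) → ℝ := fun w => phi ((Measure.map D μ (cyl A n w)).toReal) with hFdef
  have hsum : ∑ w : Fin n → ι, F w = ∑ v : Fin m → ι, phi ((μ (cyl A m v)).toReal) := by
    have h1 : ∑ w ∈ Finset.univ.image e, F w = ∑ w : Fin n → ι, F w := by
      apply Finset.sum_subset (Finset.subset_univ _)
      intro w _ hw
      have hnf : ¬ ∃ v : Fin m → ι, w = fun i => v (β i) := by
        intro ⟨v, hv⟩
        exact hw (Finset.mem_image.2 ⟨v, Finset.mem_univ _, hv.symm⟩)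
      have : Measure.map D μ (cyl A n w) = 0 := by
        rw [hmap w, hzero w hnf]; simp
      simp [F, this, phi]
    have h2 : ∑ w ∈ Finset.univ.image e, F w = ∑ v : Fin m → ι, F (e v) :=
      Finset.sum_image (fun v _ v' _ h => he h)
    rw [← h1, h2]
    apply Finset.sum_congr rfl
    intro v _
    have : Measure.map D μ (cyl A n (e v)) = μ (cyl A m v) := by
      rw [hmap (e v)]
      congr 1
      exact hpre v
    rw [hFdef]
    simp only [this]
  show -∑ w : Fin n → ι, F w = _
  rw [hsum]
  rfl

lemma EReal.le_coe_of_forall_lt {x : EReal} {y : ℝ}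
    (h : ∀ c : ℝ, y < c → x ≤ (c : EReal)) : x ≤ (y : EReal) := by
  by_contra hc
  push_neg at hc
  obtain ⟨c, hc1, hc2⟩ := EReal.lt_iff_exists_real_btwn.1 hc
  exact absurd (h c (EReal.coe_lt_coe_iff.1 hc1)) (not_le.2 hc2)

/-- The key limsup rescaling lemma. -/
lemma limsup_dilation {k : ℕ} (hk : 1 ≤ k) (g : ℕ → ℝ) (hg : ∀ n, 0 ≤ g n) :
    limsup (fun n : ℕ => ((g ((n + k - 1) / k) / n : ℝ) : EReal)) atTop
      = ((1 / (k : ℝ) : ℝ) : EReal) * limsup (fun n : ℕ => ((g n / n : ℝ) : EReal)) atTop := by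
  have hk0 : 0 < k := hk
  have hkR : (1 : ℝ) ≤ (k : ℝ) := by exact_mod_cast hk
  have hkR0 : (0 : ℝ) < (k : ℝ) := by positivity
  set b : EReal := ((k : ℝ) : EReal) with hbdef
  have hb0 : (0 : EReal) < b := EReal.coe_pos.2 hkR0
  have hbt : b ≠ ⊤ := EReal.coe_ne_top _
  have hdivmul : ∀ x : EReal, ((1 / (k : ℝ) : ℝ) : EReal) * x = x / b := by
    intro x
    rw [one_div, EReal.coe_inv, mul_comm]
    rfl
  set u : ℕ → EReal := fun n => ((g n / n : ℝ) : EReal) with hudef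
  set v : ℕ → EReal := fun n => ((g ((n + k - 1) / k) / n : ℝ) : EReal) with hvdef
  set L := limsup u atTop with hLdef
  rw [hdivmul]
  -- `≥` direction via the subsequence `n = k * M`
  have hmk : ∀ M : ℕ, (k * M + k - 1) / k = M := by
    intro M
    rw [Nat.add_sub_assoc (by omega : 1 ≤ k), Nat.mul_add_div hk0,
      Nat.div_eq_of_lt (by omega), add_zero]
  have hsub : L / b ≤ limsup v atTop := by
    have htend : Tendsto (fun M : ℕ => k * M) atTop atTop :=
      tendsto_atTop_mono (fun M => Nat.le_mul_of_pos_left M hk0) tendsto_id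
    have h2 : (fun M : ℕ => v (k * M)) = fun M => u M / b := by
      funext M
      show ((g ((k * M + k - 1) / k) / (k * M : ℕ) : ℝ) : EReal) = u M / b
      rw [hmk M]
      have : (g M / ((k * M : ℕ) : ℝ) : ℝ) = (1 / (k : ℝ)) * (g M / M) := by
        rw [div_mul_div_comm, one_mul, Nat.cast_mul]
      rw [this, EReal.coe_mul, hdivmul]
    have h3 : limsup (fun M : ℕ => u M / b) atTop = L / b :=
      EReal.limsup_div_const b hb0 hbt u
    calc L / b = limsup (fun M : ℕ => v (k * M)) atTop := by rw [h2, h3]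
      _ = limsup v (Filter.map (fun M : ℕ => k * M) atTop) := limsup_comp v _ atTop
      _ ≤ limsup v atTop := limsup_le_limsup_of_le htend
  -- `≤` direction
  have hL0 : (0 : EReal) ≤ L := by
    have h0 : limsup (fun _ : ℕ => (0 : EReal)) atTop ≤ L :=
      limsup_le_limsup (Eventually.of_forall fun n =>
        EReal.coe_nonneg.2 (div_nonneg (hg n) (Nat.cast_nonneg n)))
    simpa using h0
  have hLbot : L ≠ ⊥ := ne_bot_of_le_ne_bot (by simp) hL0
  by_cases hLtop : L = ⊤
  · refine le_antisymm ?_ hsub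
    rw [hLtop, EReal.top_div_of_pos_ne_top hb0 hbt]
    exact le_top
  · -- L is a finite nonneg real
    set l : ℝ := L.toReal with hldef
    have hlL : (l : EReal) = L := EReal.coe_toReal hLtop hLbot
    have hl0 : 0 ≤ l := by
      rw [← EReal.coe_le_coe_iff (x := 0)]
      rw [hlL]; exact_mod_cast hL0
    have hLb : L / b = ((l / (k : ℝ) : ℝ) : EReal) := by
      rw [← hlL, hbdef, EReal.coe_div]
    refine le_antisymm ?_ hsub
    rw [hLb]
    apply EReal.le_coe_of_forall_lt
    intro c hc
    set ε : ℝ := (c - l / k) / 2 with hεdef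
    have hεpos : 0 < ε := by
      have : 0 < c - l / k := by linarith
      positivity
    set b' : ℝ := l + ε * k with hb'def
    have hb'pos : 0 < b' := by nlinarith
    have hb'l : l < b' := by nlinarith
    have hcval : l / k + 2 * ε = c := by
      rw [hεdef]; ring
    have hev : ∀ᶠ n in atTop, u n < (b' : EReal) := by
      refine eventually_lt_of_limsup_lt ?_ (by isBoundedDefault)
      rw [← hLdef, ← hlL]
      exact_mod_cast hb'l
    obtain ⟨N, hN⟩ := eventually_atTop.1 hev
    set N₂ : ℕ := ⌈b' / ε⌉₊ with hN₂def
    apply limsup_le_of_le (by isBoundedDefault)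
    filter_upwards [eventually_ge_atTop (k * (N + 1)), eventually_ge_atTop (N₂ + 1),
      eventually_ge_atTop 1] with n hn1 hn2 hn3
    -- the block index
    set M : ℕ := (n + k - 1) / k with hMdef
    have hM1 : N + 1 ≤ M := by
      have h1 : N + 1 ≤ n / k := (Nat.le_div_iff_mul_le hk0).2 (by rw [mul_comm]; omega)
      have h2 : n / k ≤ M := by rw [hMdef]; exact Nat.div_le_div_right (by omega)
      omega
    have hMpos : (0 : ℝ) < (M : ℝ) := by exact_mod_cast Nat.lt_of_lt_of_le (by omega) hM1
    have hgM : g M ≤ b' * M := by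
      have hlt : g M / (M : ℝ) < b' :=
        EReal.coe_lt_coe_iff.1 (hN M (by omega))
      nlinarith [(div_lt_iff₀ hMpos).1 hlt]
    have hMle : (M : ℝ) ≤ (n : ℝ) / k + 1 := by
      have h1 : ((((n + k - 1) / k : ℕ)) : ℝ) ≤ ((n + k - 1 : ℕ) : ℝ) / (k : ℝ) :=
        Nat.cast_div_le
      have h2 : ((n + k - 1 : ℕ) : ℝ) ≤ (n : ℝ) + (k : ℝ) - 1 := by
        have : (n + k - 1 : ℕ) = n + (k - 1) := by omega
        rw [this]
        push_cast [Nat.cast_sub (by omega : 1 ≤ k)]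
        linarith
      have hnk : (n : ℝ) / k * k = n := div_mul_cancel₀ _ (ne_of_gt hkR0)
      calc (M : ℝ) ≤ ((n + k - 1 : ℕ) : ℝ) / (k : ℝ) := h1
        _ ≤ ((n : ℝ) + (k : ℝ) - 1) / k := by
            exact (div_le_div_iff_of_pos_right hkR0).2 h2
        _ ≤ (n : ℝ) / k + 1 := by
            rw [div_le_iff₀ hkR0]
            nlinarith [hnk]
    have hnpos : (0 : ℝ) < (n : ℝ) := by exact_mod_cast hn3
    have hb'n : b' ≤ ε * n := by
      have h1 : b' / ε ≤ (N₂ : ℝ) := Nat.le_ceil _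
      have h2 : (N₂ : ℝ) ≤ (n : ℝ) := by exact_mod_cast (by omega : N₂ ≤ n)
      have := (div_le_iff₀ hεpos).1 (h1.trans h2)
      linarith [this]
    -- final computation
    show ((g M / n : ℝ) : EReal) ≤ (c : EReal)
    rw [EReal.coe_le_coe_iff]
    rw [div_le_iff₀ hnpos]
    set q : ℝ := (n : ℝ) / k with hqdef
    have hqk : q * k = n := div_mul_cancel₀ _ (ne_of_gt hkR0)
    have hq0 : 0 ≤ q := by positivity
    have hMq : (M : ℝ) ≤ q + 1 := hMle
    have h5 : b' * M ≤ b' * (q + 1) := mul_le_mul_of_nonneg_left hMq hb'pos.le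
    have hkne : (k : ℝ) ≠ 0 := ne_of_gt hkR0
    have hcn : c * n = l * q + 2 * ε * (q * k) := by
      rw [← hqk, ← hcval]
      field_simp
    have hexp : b' * (q + 1) = l * q + ε * (q * k) + b' := by
      rw [hb'def]; ring
    have hbq : b' ≤ ε * (q * k) := by rw [hqk]; exact hb'n
    calc g M ≤ b' * M := hgM
      _ ≤ b' * (q + 1) := h5
      _ = l * q + ε * (q * k) + b' := hexp
      _ ≤ l * q + ε * (q * k) + ε * (q * k) := by linarith
      _ = c * n := by rw [hcn]; ring

lemma HsdP_dilation {X : Type*} [MeasurableSpace X] (μ : Measure (ℕ → X))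
    [IsProbabilityMeasure μ] {ι : Type*} [Fintype ι] {A : ι → Set X} (hA : IsPartition A)
    {k : ℕ} (hk : 1 ≤ k) :
    HsdP (Measure.map (fun x : ℕ → X => fun n => x (n / k)) μ) A
      = ((1 / (k : ℝ) : ℝ) : EReal) * HsdP μ A := by
  unfold HsdP
  have hfe : (fun n : ℕ =>
      ((partEnt (Measure.map (fun x : ℕ → X => fun j => x (j / k)) μ) (cyl A n) / n : ℝ) : EReal))
      = fun n : ℕ =>
      (((fun N => partEnt μ (cyl A N)) ((n + k - 1) / k) / n : ℝ) : EReal) := by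
    funext n
    rw [partEnt_dilation μ hA hk n]
  rw [hfe, limsup_dilation hk _ (fun N => partEnt_nonneg μ (cyl A N))]

/-- for the `k`-dilation `𝔇`, `H^sd(𝔇_*μ) = (1/k)·H^sd(μ)`. -/
theorem hsd_dilation {X : Type*} [MeasurableSpace X]
    (μ : Measure (ℕ → X)) [IsProbabilityMeasure μ] (k : ℕ) (hk : 1 ≤ k) :
    Hsd (Measure.map (fun x : ℕ → X => fun n => x (n / k)) μ) =
      ((1 / (k : ℝ) : ℝ) : EReal) * Hsd μ := by
  have hkR0 : (0 : ℝ) < (k : ℝ) := by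
    have : (1 : ℝ) ≤ (k : ℝ) := by exact_mod_cast hk
    linarith
  set b : EReal := ((k : ℝ) : EReal) with hbdef
  have hb0 : (0 : EReal) < b := EReal.coe_pos.2 hkR0
  have hbt : b ≠ ⊤ := EReal.coe_ne_top _
  have hdivmul : ∀ x : EReal, ((1 / (k : ℝ) : ℝ) : EReal) * x = x / b := by
    intro x
    rw [one_div, EReal.coe_inv, mul_comm]
    rfl
  rw [hdivmul]
  unfold Hsd
  have hrhs : (⨆ (m : ℕ) (A : Fin m → Set X) (_ : IsPartition A), HsdP μ A) / b
      = ⨆ (m : ℕ) (A : Fin m → Set X) (_ : IsPartition A), HsdP μ A / b := by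
    rw [EReal.iSup_div_const b hb0 hbt]
    refine iSup_congr fun m => ?_
    rw [EReal.iSup_div_const b hb0 hbt]
    refine iSup_congr fun A => ?_
    rw [EReal.iSup_div_const b hb0 hbt]
  rw [hrhs]
  refine iSup_congr fun m => iSup_congr fun A => iSup_congr fun hA => ?_
  rw [← hdivmul]
  exact HsdP_dilation μ hA hk
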